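/- Termination of cover construction: over a finite variable set, the iterative process that, while ¬φ ∧ ⋀PI has a model π, picks an unsatisfiable core π_p ⊆ π of φ ∧ π and adds the clause ¬π_p to PI, terminates after finitely many iterations, and upon termination ⋀PI is logically equivalent to φ. -/

import Mathlib

/-- A literal: a variable paired with a polarity. -/
abbrev Lit (V : Type) := V × Bool
/-- A clause: a finite set of literals, read disjunctively. -/
abbrev Clause (V : Type) := Finset (Lit V)
/-- A term: a finite set of literals, read conjunctively. -/
abbrev PTerm (V : Type) := Finset (Lit V)

/-- An assignment satisfies a clause if it satisfies some literal of it. -/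
def clauseSat {V : Type} (σ : V → Bool) (c : Clause V) : Prop := ∃ l ∈ c, σ l.1 = l.2
/-- An assignment satisfies a term if it satisfies every literal of it. -/
def termSat {V : Type} (σ : V → Bool) (t : PTerm V) : Prop := ∀ l ∈ t, σ l.1 = l.2
/-- A formula (given by its set of models) entails a clause: `c` is an implicate of `φ`. -/
def entailsClause {V : Type} (φ : (V → Bool) → Prop) (c : Clause V) : Prop :=
  ∀ σ, φ σ → clauseSat σ c
/-- A term entails a formula: `t` is an implicant of `φ`. -/
def termEntails {V : Type} (t : PTerm V) (φ : (V → Bool) → Prop) : Prop :=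
  ∀ σ, termSat σ t → φ σ
/-- The clause `¬t` obtained by negating every literal of the term `t` (and dually). -/
def negTerm {V : Type} [DecidableEq V] (t : PTerm V) : Clause V :=
  t.image (fun l => (l.1, !l.2))

/-- The total term corresponding to an assignment. -/
def fullTerm {V : Type} [Fintype V] [DecidableEq V] (σ : V → Bool) : PTerm V :=
  Finset.univ.image (fun v => (v, σ v))

theorem cover_construction_terminates {V : Type} [Fintype V] [DecidableEq V]
    (φ : (V → Bool) → Prop) (PI : ℕ → Finset (Clause V))
    (h0 : PI 0 = ∅)
    (hstep : ∀ n, (∃ σ, ¬ φ σ ∧ ∀ c ∈ PI n, clauseSat σ c) →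
      ∃ σ, (¬ φ σ ∧ ∀ c ∈ PI n, clauseSat σ c) ∧
        ∃ t ⊆ fullTerm σ, (¬ ∃ τ, φ τ ∧ termSat τ t) ∧
          PI (n + 1) = insert (negTerm t) (PI n))
    (hstop : ∀ n, (¬ ∃ σ, ¬ φ σ ∧ ∀ c ∈ PI n, clauseSat σ c) → PI (n + 1) = PI n) :
    ∃ N, (¬ ∃ σ, ¬ φ σ ∧ ∀ c ∈ PI N, clauseSat σ c) ∧
      (∀ σ, φ σ ↔ ∀ c ∈ PI N, clauseSat σ c) := by
  -- Invariant: every clause in PI n is an implicate of φ.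
  have hinv : ∀ n, ∀ c ∈ PI n, entailsClause φ c := by
    intro n
    induction n with
    | zero => simp [h0]
    | succ n ih =>
      by_cases hc : ∃ σ, ¬ φ σ ∧ ∀ c ∈ PI n, clauseSat σ c
      · obtain ⟨σ, _, t, _, hunsat, heq⟩ := hstep n hc
        intro c hcmem
        rw [heq, Finset.mem_insert] at hcmem
        rcases hcmem with rfl | hcmem
        · intro τ hτ
          have hnts : ¬ termSat τ t := fun h => hunsat ⟨τ, hτ, h⟩
          simp only [termSat, not_forall] at hnts
          obtain ⟨l, hl, hne⟩ := hnts
          refine ⟨(l.1, !l.2), Finset.mem_image.2 ⟨l, hl, rfl⟩, ?_⟩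
          cases hb : τ l.1 <;> cases hb2 : l.2 <;> simp_all
        · exact ih c hcmem
      · rw [hstop n hc]; exact ih
  -- Termination: find N with no countermodel.
  have hterm : ∃ N, ¬ ∃ σ, ¬ φ σ ∧ ∀ c ∈ PI N, clauseSat σ c := by
    by_contra hall
    push_neg at hall
    have hgrow : ∀ n, n ≤ (PI n).card := by
      intro n
      induction n with
      | zero => exact Nat.zero_le _
      | succ n ih =>
        obtain ⟨σ, ⟨hφσ, hsat⟩, t, hts, _, heq⟩ := hstep n (hall n)
        have hnotmem : negTerm t ∉ PI n := by
          intro hmem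
          obtain ⟨l, hl, hlsat⟩ := hsat _ hmem
          obtain ⟨l', hl', rfl⟩ := Finset.mem_image.1 hl
          have := hts hl'
          simp only [fullTerm, Finset.mem_image, Finset.mem_univ, true_and] at this
          obtain ⟨v, hv⟩ := this
          cases hv
          simp at hlsat
        rw [heq, Finset.card_insert_of_notMem hnotmem]
        omega
    have := hgrow (Fintype.card (Clause V) + 1)
    have := Finset.card_le_univ (PI (Fintype.card (Clause V) + 1))
    omega
  obtain ⟨N, hN⟩ := hterm
  refine ⟨N, hN, fun σ => ⟨fun hφ c hc => hinv N c hc σ hφ, fun hsat => ?_⟩⟩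
  by_contra hφ
  exact hN ⟨σ, hφ, hsat⟩
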